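/- arXiv:2012.07249 — 5 statements merged into one kernel-verified Lean document; each statement's English description precedes it below -/
import Mathlib

section
/- For all integers n ≥ k ≥ 0, the (q,r)-Whitney-Lah numbers satisfy the vertical recurrence relation L_{m,r}[n+1,k+1]_q = Σ_{j=k}^{n} q^{2r+mk+mj} · (∏_{i=j+1}^{n} [2r+(k+1)m+im]_q) · L_{m,r}[j,k]_q, where the product over an empty index range equals 1. -/
open Finset

/-- The `q`-integer `[s]_q = (q^s - 1)/(q - 1)` for an integer `s`. -/
noncomputable def qint (q : ℝ) (s : ℤ) : ℝ := (q ^ s - 1) / (q - 1)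

/-- The `(q,r)`-Whitney-Lah numbers `L_{m,r}[n,k]_q`, defined by `L[0,0] = 1`,
`L[n,k] = 0` for `k > n`, and the triangular recurrence
`L[n,k] = q^(2r+m(k-1)+m(n-1)) L[n-1,k-1] + [2r+km+(n-1)m]_q L[n-1,k]`. -/
noncomputable def qLah (q : ℝ) (m r : ℕ) : ℕ → ℕ → ℝ
  | 0, 0 => 1
  | 0, _ + 1 => 0
  | n + 1, 0 => qint q (2 * r + n * m) * qLah q m r n 0
  | n + 1, k + 1 =>
      q ^ (2 * r + m * k + m * n) * qLah q m r n k
        + qint q (2 * r + (k + 1) * m + n * m) * qLah q m r n (k + 1)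

lemma qLah_eq_zero (q : ℝ) (m r : ℕ) : ∀ n k : ℕ, n < k → qLah q m r n k = 0 := by
  intro n
  induction n with
  | zero =>
    intro k hk
    match k, hk with
    | k + 1, _ => simp [qLah]
  | succ n ih =>
    intro k hk
    match k, hk with
    | k + 1, hk =>
      have h1 : n < k := by omega
      have h2 : n < k + 1 := by omega
      simp [qLah, ih _ h1, ih _ h2]

theorem qLah_vertical_recurrence (q : ℝ) (hq : 0 < q) (hq1 : q ≠ 1) (m r : ℕ) (hm : 0 < m) (hr : 0 < r)
    (n k : ℕ) (hkn : k ≤ n) :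
    qLah q m r (n + 1) (k + 1) =
      ∑ j ∈ Finset.Icc k n,
        q ^ (2 * r + m * k + m * j) *
          (∏ i ∈ Finset.Icc (j + 1) n, qint q (2 * r + (k + 1) * m + i * m)) *
          qLah q m r j k := by
  induction n, hkn using Nat.le_induction with
  | base =>
    simp [qLah, qLah_eq_zero q m r k (k + 1) (by omega)]
  | succ n hn ih =>
    have hrec : qLah q m r (n + 1 + 1) (k + 1) =
        q ^ (2 * r + m * k + m * (n + 1)) * qLah q m r (n + 1) k
          + qint q (2 * r + (k + 1) * m + (n + 1) * m) * qLah q m r (n + 1) (k + 1) := rfl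
    rw [hrec, ih, Finset.sum_Icc_succ_top (by omega : k ≤ n + 1)]
    rw [show (Finset.Icc (n + 1 + 1) (n + 1)) = ∅ from Finset.Icc_eq_empty (by omega)]
    simp only [Finset.prod_empty, mul_one]
    rw [Finset.mul_sum, add_comm]
    congr 1
    apply Finset.sum_congr rfl
    intro j hj
    have hj' : j ≤ n := (Finset.mem_Icc.mp hj).2
    rw [Finset.prod_Icc_succ_top (by omega : j + 1 ≤ n + 1)]
    simp only [show ∀ i : ℕ, ((i : ℤ) * (m : ℤ)) = ((m : ℤ) * i) from fun i => mul_comm _ _]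
    push_cast
    ring
end

section
/- For all integers n ≥ k ≥ 0, the (q,r)-Whitney-Lah numbers satisfy the horizontal recurrence relation L_{m,r}[n,k]_q = Σ_{j=0}^{n−k} (−1)^j q^{−2r−m(k+j)−nm} · (∏_{h=k+1}^{k+j} q^{−(2r+mh+nm−m)} [2r+mh+nm]_q) · L_{m,r}[n+1,k+j+1]_q, where the product over an empty index range equals 1. -/
open Finset

lemma qLah_step (q : ℝ) (hq : q ≠ 0) (m r n k : ℕ) :
    qLah q m r n k =
      q ^ (-(2 * (r : ℤ) + m * k + n * m)) * qLah q m r (n + 1) (k + 1)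
        - q ^ (-(2 * (r : ℤ) + m * k + n * m)) * qint q (2 * (r : ℤ) + m * (k + 1) + n * m)
            * qLah q m r n (k + 1) := by
  have hdef : qLah q m r (n + 1) (k + 1) =
      q ^ (2 * r + m * k + m * n) * qLah q m r n k
        + qint q (2 * r + (k + 1) * m + n * m) * qLah q m r n (k + 1) := rfl
  have hpow : q ^ (-(2 * (r : ℤ) + m * k + n * m)) * q ^ (2 * r + m * k + m * n : ℕ) = 1 := by
    have hE : (-(2 * (r : ℤ) + m * k + n * m)) + ((2 * r + m * k + m * n : ℕ) : ℤ) = 0 := by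
      push_cast; ring
    rw [← zpow_natCast q (2 * r + m * k + m * n), ← zpow_add₀ hq, hE, zpow_zero]
  rw [hdef, show (2 * (r : ℤ) + (↑k + 1) * ↑m + ↑n * ↑m) = 2 * (r : ℤ) + ↑m * (↑k + 1) + ↑n * ↑m
    from by ring]
  linear_combination (-(qLah q m r n k)) * hpow

theorem qLah_horizontal_recurrence (q : ℝ) (hq : 0 < q) (hq1 : q ≠ 1) (m r : ℕ) (hm : 0 < m) (hr : 0 < r)
    (n k : ℕ) (hkn : k ≤ n) :
    qLah q m r n k =
      ∑ j ∈ Finset.range (n - k + 1),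
        (-1 : ℝ) ^ j * q ^ (-(2 * (r : ℤ) + m * (k + j) + n * m)) *
          (∏ h ∈ Finset.Icc (k + 1) (k + j),
            q ^ (-(2 * (r : ℤ) + m * h + n * m - m)) * qint q (2 * (r : ℤ) + m * h + n * m)) *
          qLah q m r (n + 1) (k + j + 1) := by
  have hq0 : q ≠ 0 := ne_of_gt hq
  obtain ⟨d, rfl⟩ : ∃ d, n = k + d := ⟨n - k, by omega⟩
  clear hkn
  induction d generalizing k with
  | zero =>
    simp only [Nat.add_zero, Nat.sub_self, zero_add, Finset.sum_range_one, pow_zero,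
      Nat.cast_zero, add_zero, Finset.Icc_eq_empty (by omega : ¬ k + 1 ≤ k), Finset.prod_empty,
      one_mul, mul_one]
    rw [qLah_step q hq0 m r k k, qLah_eq_zero q m r k (k + 1) (by omega)]
    push_cast
    ring_nf
  | succ d ih =>
    simp only [show k + (d + 1) = k + d + 1 from by omega,
      show k + d + 1 - k = d + 1 from by omega]
    rw [qLah_step q hq0 m r (k + d + 1) k]
    conv_rhs => rw [Finset.sum_range_succ']
    have ih' := ih (k + 1)
    rw [show k + 1 + d = k + d + 1 from by omega,
      show k + d + 1 - (k + 1) = d from by omega] at ih'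
    rw [ih', Finset.mul_sum, sub_eq_add_neg, ← Finset.sum_neg_distrib]
    conv_lhs => rw [add_comm]
    congr 1
    · refine Finset.sum_congr rfl fun j hj => ?_
      rw [show k + (j + 1) = k + 1 + j from by omega,
        show Finset.Icc (k + 1) (k + 1 + j) = Finset.Ico (k + 1) (k + 1 + j + 1) from
          (Finset.Ico_add_one_right_eq_Icc _ _).symm,
        Finset.prod_eq_prod_Ico_succ_bot (by omega), Finset.Ico_add_one_right_eq_Icc]
      push_cast
      have hpow : q ^ (-(2 * (r:ℤ) + (m:ℤ) * ((k:ℤ) + ((j:ℤ) + 1)) + ((k:ℤ) + (d:ℤ) + 1) * (m:ℤ)))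
            * q ^ (-(2 * (r:ℤ) + (m:ℤ) * ((k:ℤ) + 1) + ((k:ℤ) + (d:ℤ) + 1) * (m:ℤ) - (m:ℤ)))
          = q ^ (-(2 * (r:ℤ) + (m:ℤ) * (k:ℤ) + ((k:ℤ) + (d:ℤ) + 1) * (m:ℤ)))
            * q ^ (-(2 * (r:ℤ) + (m:ℤ) * ((k:ℤ) + 1 + (j:ℤ)) + ((k:ℤ) + (d:ℤ) + 1) * (m:ℤ))) := by
        rw [← zpow_add₀ hq0, ← zpow_add₀ hq0]
        congr 1
        ring
      linear_combination ((-1:ℝ) ^ j *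
        qint q (2 * (r:ℤ) + (m:ℤ) * ((k:ℤ) + 1) + ((k:ℤ) + (d:ℤ) + 1) * (m:ℤ)) *
        (∏ x ∈ Finset.Icc (k + 1 + 1) (k + 1 + j),
          q ^ (-(2 * (r:ℤ) + (m:ℤ) * (x:ℤ) + ((k:ℤ) + (d:ℤ) + 1) * (m:ℤ) - (m:ℤ))) *
            qint q (2 * (r:ℤ) + (m:ℤ) * (x:ℤ) + ((k:ℤ) + (d:ℤ) + 1) * (m:ℤ))) *
        qLah q m r (k + d + 1 + 1) (k + 1 + j + 1)) * hpow
    · simp only [pow_zero, Nat.add_zero, Nat.cast_zero, add_zero,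
        Finset.Icc_eq_empty (by omega : ¬ k + 1 ≤ k), Finset.prod_empty, one_mul, mul_one]
end

section
/- For every integer n ≥ 0 and every real number x, Σ_{k=0}^{n} L_{m,r}[n,k]_q · ∏_{i=0}^{k−1} q^{−im}(x − [im]_q) = ∏_{i=0}^{n−1} (q^{2r+im} x + [2r+im]_q). (With x = [t]_q this is the horizontal generating function Σ_{k=0}^{n} L_{m,r}[n,k]_q [t|m]_{k,q} = [t+2r|m]_{\overline{n},q}, where [t|m]_{k,q} = ∏_{i=0}^{k−1}[t−im]_q is the q-falling factorial and [t+2r|m]_{\overline{n},q} = ∏_{i=0}^{n−1}[t+2r+im]_q is the q-rising factorial.) -/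
open Finset

noncomputable def Pfun (q : ℝ) (m : ℕ) (x : ℝ) (k : ℕ) : ℝ :=
  ∏ i ∈ Finset.range k, (q ^ (-((m : ℤ) * i)) * (x - qint q ((m : ℤ) * i)))

lemma Pfun_succ (q : ℝ) (m : ℕ) (x : ℝ) (k : ℕ) :
    Pfun q m x (k + 1) = Pfun q m x k * (q ^ (-((m : ℤ) * k)) * (x - qint q ((m : ℤ) * k))) :=
  Finset.prod_range_succ _ _

noncomputable def hh (q : ℝ) (m r n : ℕ) (x : ℝ) (k : ℕ) : ℝ :=
  qint q (2 * r + k * m + n * m) * qLah q m r n k * Pfun q m x k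

lemma qint_add (q : ℝ) (hq0 : q ≠ 0) (hq1 : q ≠ 1) (a b : ℤ) :
    qint q (a + b) = q ^ a * qint q b + qint q a := by
  have h1 : q - 1 ≠ 0 := sub_ne_zero.mpr hq1
  simp only [qint]
  rw [zpow_add₀ hq0]
  field_simp
  ring

theorem aux (q : ℝ) (hq : 0 < q) (hq1 : q ≠ 1) (m r : ℕ) (n : ℕ) (x : ℝ) :
    ∑ k ∈ Finset.range (n + 1), qLah q m r n k * Pfun q m x k
      = ∏ i ∈ Finset.range n, (q ^ (2 * r + i * m) * x + qint q (2 * r + i * m)) := by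
  have hq0 : q ≠ 0 := ne_of_gt hq
  induction n with
  | zero => simp [qLah, Pfun]
  | succ n ih =>
    rw [Finset.sum_range_succ', Finset.prod_range_succ, ← ih, Finset.sum_mul]
    have step : ∀ k ∈ Finset.range (n + 1),
        qLah q m r (n + 1) (k + 1) * Pfun q m x (k + 1)
          = qLah q m r n k * Pfun q m x k * (q ^ (2 * r + n * m) * x + qint q (2 * r + n * m))
            + (hh q m r n x (k + 1) - hh q m r n x k) := by
      intro k _
      simp only [qLah, hh, Pfun_succ]
      push_cast
      have e1 : q ^ (2 * r + m * k + m * n) * q ^ (-((m : ℤ) * k)) = q ^ (2 * r + n * m) := by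
        rw [← zpow_natCast q (2 * r + m * k + m * n), ← zpow_add₀ hq0,
          ← zpow_natCast q (2 * r + n * m)]
        congr 1
        push_cast
        ring
      have e0 : qint q (2 * (r : ℤ) + (k : ℤ) * m + (n : ℤ) * m)
          = q ^ (2 * r + n * m) * qint q ((m : ℤ) * k) + qint q (2 * (r : ℤ) + (n : ℤ) * m) := by
        rw [show (2 * (r : ℤ) + (k : ℤ) * m + (n : ℤ) * m)
            = (2 * (r : ℤ) + (n : ℤ) * m) + (m : ℤ) * k by ring,
          qint_add q hq0 hq1, ← zpow_natCast q (2 * r + n * m)]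
        push_cast
        try ring
      rw [e0]
      linear_combination (qLah q m r n k * Pfun q m x k * (x - qint q ((m : ℤ) * k))) * e1
    rw [Finset.sum_congr rfl step, Finset.sum_add_distrib, Finset.sum_range_sub (hh q m r n x)]
    have h1 : hh q m r n x (n + 1) = 0 := by
      simp [hh, qLah_eq_zero q m r n (n + 1) (by omega)]
    have h2 : qLah q m r (n + 1) 0 * Pfun q m x 0 = hh q m r n x 0 := by
      simp only [qLah, hh, Pfun]
      norm_num
    rw [h1, h2]
    ring

theorem qLah_horizontal_generating_function (q : ℝ) (hq : 0 < q) (hq1 : q ≠ 1) (m r : ℕ) (hm : 0 < m) (hr : 0 < r)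
    (n : ℕ) (x : ℝ) :
    ∑ k ∈ Finset.range (n + 1),
        qLah q m r n k * ∏ i ∈ Finset.range k, (q ^ (-((m : ℤ) * i)) * (x - qint q ((m : ℤ) * i))) =
      ∏ i ∈ Finset.range n, (q ^ (2 * r + i * m) * x + qint q (2 * r + i * m)) := by
  exact aux q hq hq1 m r n x
end

section
/- For every integer k ≥ 0, the following identity of formal power series in ℝ[[T]] holds: Σ_{n≥0} L_{m,r}[n,k]_q · T^n/[n]_q! = (1/([k]_{q^m}! · [m]_q^k)) · Σ_{j=0}^{k} (−1)^{k−j} q^{m·binom(k−j,2)} [k choose j]_{q^m} · (Σ_{n≥0} (∏_{i=0}^{n−1}[2r+jm+im]_q) · T^n/[n]_q!). (This is the exponential generating function of the (q,r)-Whitney-Lah numbers, with F[x,m,T] = Σ_{n≥0} [x|m]_{\overline{n},q} T^n/[n]_q! evaluated at x = 2r+jm.) -/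
open Finset

/-- The `q`-factorial `[n]_q! = ∏_{i=1}^n [i]_q`. -/
noncomputable def qfact (q : ℝ) : ℕ → ℝ
  | 0 => 1
  | n + 1 => qfact q n * qint q (n + 1)

/-- The `q`-binomial coefficient `[k choose j]_q`. -/
noncomputable def qbinom (q : ℝ) (k j : ℕ) : ℝ := qfact q k / (qfact q j * qfact q (k - j))

/- ---------------------------------------------------------------- -/
/- Auxiliary lemmas -/

lemma qint_cast (q : ℝ) (s : ℕ) : qint q (s : ℤ) = (q ^ s - 1) / (q - 1) := by
  simp [qint]

lemma qpow_ne_one {q : ℝ} (hq : 0 < q) (hq1 : q ≠ 1) {s : ℕ} (hs : s ≠ 0) : q ^ s ≠ 1 := by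
  rcases hq1.lt_or_gt with h | h
  · exact ne_of_lt (pow_lt_one₀ hq.le h hs)
  · exact ne_of_gt (one_lt_pow₀ h hs)

lemma qint_ne_zero {q : ℝ} (hq : 0 < q) (hq1 : q ≠ 1) {s : ℕ} (hs : s ≠ 0) :
    qint q (s : ℤ) ≠ 0 := by
  rw [qint_cast]
  exact div_ne_zero (sub_ne_zero.mpr (qpow_ne_one hq hq1 hs)) (sub_ne_zero.mpr hq1)

lemma qfact_succ (q : ℝ) (n : ℕ) : qfact q (n + 1) = qfact q n * qint q (n + 1) := rfl

lemma qfact_ne_zero {q : ℝ} (hq : 0 < q) (hq1 : q ≠ 1) (n : ℕ) : qfact q n ≠ 0 := by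
  induction n with
  | zero => norm_num [qfact]
  | succ n ih =>
    rw [qfact_succ]
    refine mul_ne_zero ih ?_
    have := qint_ne_zero hq hq1 (s := n+1) (Nat.succ_ne_zero n)
    push_cast at this ⊢
    exact this

lemma qbinom_pascal {q : ℝ} (hq : 0 < q) (hq1 : q ≠ 1) {k j : ℕ} (hj : j + 1 ≤ k) :
    qbinom q (k+1) (j+1) = qbinom q k j + q ^ (j+1) * qbinom q k (j+1) := by
  obtain ⟨d, rfl⟩ : ∃ d, k = j + 1 + d := ⟨k - (j+1), by omega⟩
  have e1 : j + 1 + d + 1 - (j + 1) = d + 1 := by omega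
  have e2 : j + 1 + d - j = d + 1 := by omega
  have e3 : j + 1 + d - (j + 1) = d := by omega
  have e4 : j + 1 + d + 1 = (j + 1 + d) + 1 := by omega
  simp only [qbinom, e1, e2, e3]
  rw [e4, qfact_succ q (j+1+d)]
  rw [show qfact q (d+1) = qfact q d * qint q (d+1) from rfl]
  rw [show qfact q (j+1) = qfact q j * qint q (j+1) from rfl]
  have hfj := qfact_ne_zero hq hq1 j
  have hfd := qfact_ne_zero hq hq1 d
  have hfk := qfact_ne_zero hq hq1 (j+1+d)
  have hij : qint q ((j:ℤ)+1) ≠ 0 := by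
    have := qint_ne_zero hq hq1 (s := j+1) (Nat.succ_ne_zero j); push_cast at this; exact this
  have hid : qint q ((d:ℤ)+1) ≠ 0 := by
    have := qint_ne_zero hq hq1 (s := d+1) (Nat.succ_ne_zero d); push_cast at this; exact this
  have hq0 : q - 1 ≠ 0 := sub_ne_zero.mpr hq1
  have key : qint q ((j:ℤ)+1+d+1) = qint q ((j:ℤ)+1) + q^(j+1) * qint q ((d:ℤ)+1) := by
    have c1 : ((j:ℤ)+1+d+1) = ((j+d+2 : ℕ) : ℤ) := by push_cast; ring
    have c2 : ((j:ℤ)+1) = ((j+1 : ℕ) : ℤ) := by push_cast; ring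
    have c3 : ((d:ℤ)+1) = ((d+1 : ℕ) : ℤ) := by push_cast; ring
    rw [c1, c2, c3, qint_cast, qint_cast, qint_cast]
    field_simp
    ring
  push_cast at key ⊢
  rw [key]
  field_simp

lemma qbinom_self {q : ℝ} (hq : 0 < q) (hq1 : q ≠ 1) (k : ℕ) : qbinom q k k = 1 := by
  simp [qbinom, Nat.sub_self, qfact, qfact_ne_zero hq hq1 k]

lemma qbinom_zero {q : ℝ} (hq : 0 < q) (hq1 : q ≠ 1) (k : ℕ) : qbinom q k 0 = 1 := by
  simp [qbinom, qfact, qfact_ne_zero hq hq1 k]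

/-- The coefficients in the expansion. -/
noncomputable def cc (q : ℝ) (m k j : ℕ) : ℝ :=
  (-1 : ℝ) ^ (k - j) * q ^ (m * Nat.choose (k - j) 2) * qbinom (q ^ m) k j

lemma cc_self {q : ℝ} (hq : 0 < q) (hq1 : q ≠ 1) {m : ℕ} (hm : m ≠ 0) (k : ℕ) :
    cc q m k k = 1 := by
  have hQ : (0:ℝ) < q ^ m := pow_pos hq m
  have hQ1 : q ^ m ≠ 1 := qpow_ne_one hq hq1 hm
  simp [cc, Nat.sub_self, qbinom_self hQ hQ1]

lemma choose_succ_two (e : ℕ) : Nat.choose (e+1) 2 = Nat.choose e 2 + e := by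
  rw [Nat.choose_succ_succ]
  simp [Nat.choose_one_right]
  omega

lemma cc_zero_succ {q : ℝ} (hq : 0 < q) (hq1 : q ≠ 1) {m : ℕ} (hm : m ≠ 0) (k : ℕ) :
    cc q m (k+1) 0 = -((q ^ m) ^ k) * cc q m k 0 := by
  have hQ : (0:ℝ) < q ^ m := pow_pos hq m
  have hQ1 : q ^ m ≠ 1 := qpow_ne_one hq hq1 hm
  simp only [cc, Nat.sub_zero, qbinom_zero hQ hQ1, choose_succ_two, pow_mul, mul_add, pow_add]
  ring

lemma cc_pascal {q : ℝ} (hq : 0 < q) (hq1 : q ≠ 1) {m : ℕ} (hm : m ≠ 0) {k j : ℕ}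
    (hj : j + 1 ≤ k) :
    cc q m (k+1) (j+1) = cc q m k j - (q ^ m) ^ k * cc q m k (j+1) := by
  have hQ : (0:ℝ) < q ^ m := pow_pos hq m
  have hQ1 : q ^ m ≠ 1 := qpow_ne_one hq hq1 hm
  obtain ⟨e, rfl⟩ : ∃ e, k = j + 1 + e := ⟨k - (j+1), by omega⟩
  have e1 : j + 1 + e + 1 - (j + 1) = e + 1 := by omega
  have e2 : j + 1 + e - j = e + 1 := by omega
  have e3 : j + 1 + e - (j + 1) = e := by omega
  simp only [cc, e1, e2, e3]
  rw [qbinom_pascal hQ hQ1 hj, choose_succ_two]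
  simp only [pow_mul, pow_add]
  ring

lemma cc_sum_succ {q : ℝ} (hq : 0 < q) (hq1 : q ≠ 1) {m : ℕ} (hm : m ≠ 0) (k : ℕ) :
    ∑ j ∈ range (k+2), cc q m (k+1) j
      = (1 - (q ^ m) ^ k) * ∑ j ∈ range (k+1), cc q m k j := by
  rw [Finset.sum_range_succ' (fun j => cc q m (k+1) j)]
  rw [Finset.sum_range_succ (fun j => cc q m (k+1) (j+1))]
  have h3 : ∀ j ∈ range k, cc q m (k+1) (j+1) = cc q m k j - (q ^ m) ^ k * cc q m k (j+1) := by
    intro j hj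
    exact cc_pascal hq hq1 hm (by simpa using (mem_range.mp hj))
  rw [Finset.sum_congr rfl h3, cc_self hq hq1 hm (k+1), cc_zero_succ hq hq1 hm]
  have h4 : ∑ j ∈ range k, (cc q m k j - (q ^ m) ^ k * cc q m k (j+1))
      = (∑ j ∈ range (k+1), cc q m k j - cc q m k k)
        - (q ^ m) ^ k * (∑ j ∈ range (k+1), cc q m k j - cc q m k 0) := by
    rw [Finset.sum_sub_distrib, ← Finset.mul_sum]
    congr 1
    · rw [Finset.sum_range_succ]; ring
    · congr 1
      rw [Finset.sum_range_succ' (fun j => cc q m k j)]; ring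
  rw [h4, cc_self hq hq1 hm k]
  ring

lemma cc_sum_eq_zero {q : ℝ} (hq : 0 < q) (hq1 : q ≠ 1) {m : ℕ} (hm : m ≠ 0) {k : ℕ}
    (hk : k ≠ 0) : ∑ j ∈ range (k+1), cc q m k j = 0 := by
  induction k with
  | zero => omega
  | succ k ih =>
    rw [show k + 1 + 1 = k + 2 from rfl, cc_sum_succ hq hq1 hm k]
    rcases Nat.eq_zero_or_pos k with h | h
    · subst h; simp
    · rw [ih (by omega)]; ring

lemma star {q : ℝ} (hq : 0 < q) (hq1 : q ≠ 1) {m : ℕ} (hm : m ≠ 0) (r n : ℕ) {k j : ℕ}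
    (hj : j ≤ k) :
    cc q m (k+1) j * (qint q (2*r + j*m + n*m) - qint q (2*r + (k+1)*m + n*m))
      = q ^ (2*r + m*k + m*n) * (qint (q^m) ((k:ℤ)+1) * qint q m) * cc q m k j := by
  have hQ : (0:ℝ) < q ^ m := pow_pos hq m
  have hQ1 : q ^ m ≠ 1 := qpow_ne_one hq hq1 hm
  have hq0 : q - 1 ≠ 0 := sub_ne_zero.mpr hq1
  have hQ0 : q ^ m - 1 ≠ 0 := sub_ne_zero.mpr hQ1
  obtain ⟨d, rfl⟩ : ∃ d, k = j + d := ⟨k - j, by omega⟩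
  have e1 : j + d + 1 - j = d + 1 := by omega
  have e2 : j + d - j = d := by omega
  simp only [cc, qbinom, e1, e2]
  rw [show qfact (q^m) (j+d+1) = qfact (q^m) (j+d) * qint (q^m) ((j+d : ℕ) + 1) from rfl,
      show qfact (q^m) (d+1) = qfact (q^m) d * qint (q^m) ((d : ℕ) + 1) from rfl,
      choose_succ_two]
  have hfj := qfact_ne_zero hQ hQ1 j
  have hfd := qfact_ne_zero hQ hQ1 d
  have hfk := qfact_ne_zero hQ hQ1 (j+d)
  have c1 : qint q (2*(r:ℤ) + (j:ℤ)*(m:ℤ) + (n:ℤ)*(m:ℤ)) = (q^(2*r+j*m+n*m) - 1)/(q-1) := by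
    rw [show (2*(r:ℤ) + (j:ℤ)*(m:ℤ) + (n:ℤ)*(m:ℤ)) = ((2*r+j*m+n*m : ℕ) : ℤ) by push_cast; ring,
        qint_cast]
  have c2 : qint q (2*(r:ℤ) + ((j:ℤ)+(d:ℤ)+1)*(m:ℤ) + (n:ℤ)*(m:ℤ))
      = (q^(2*r+(j+d+1)*m+n*m) - 1)/(q-1) := by
    rw [show (2*(r:ℤ) + ((j:ℤ)+(d:ℤ)+1)*(m:ℤ) + (n:ℤ)*(m:ℤ)) = ((2*r+(j+d+1)*m+n*m : ℕ) : ℤ) by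
          push_cast; ring, qint_cast]
  have c3 : qint (q^m) ((j:ℤ)+(d:ℤ)+1) = ((q^m)^(j+d+1) - 1)/(q^m-1) := by
    rw [show ((j:ℤ)+(d:ℤ)+1) = ((j+d+1 : ℕ) : ℤ) by push_cast; ring, qint_cast]
  have c4 : qint (q^m) ((d:ℤ)+1) = ((q^m)^(d+1) - 1)/(q^m-1) := by
    rw [show ((d:ℤ)+1) = ((d+1 : ℕ) : ℤ) by push_cast; ring, qint_cast]
  have c5 : qint q ((m:ℤ)) = (q^m - 1)/(q-1) := qint_cast q m
  have h5 : (q^m)^(d+1) - 1 ≠ 0 := sub_ne_zero.mpr (qpow_ne_one hQ hQ1 (Nat.succ_ne_zero d))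
  have hd : (q^(2*r+j*m+n*m) - 1)/(q-1) - (q^(2*r+(j+d+1)*m+n*m) - 1)/(q-1)
      = -(q^(2*r+j*m+n*m) * (((q^m)^(d+1) - 1)/(q^m-1) * ((q^m - 1)/(q-1)))) := by
    field_simp
    ring
  push_cast
  rw [c1, c2, c3, c4, c5, hd]
  field_simp
  ring

lemma qLah_zz (q : ℝ) (m r : ℕ) : qLah q m r 0 0 = 1 := rfl
lemma qLah_zs (q : ℝ) (m r k : ℕ) : qLah q m r 0 (k+1) = 0 := rfl
lemma qLah_sz (q : ℝ) (m r n : ℕ) :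
    qLah q m r (n+1) 0 = qint q (2*r + n*m) * qLah q m r n 0 := rfl
lemma qLah_ss (q : ℝ) (m r n k : ℕ) :
    qLah q m r (n+1) (k+1) = q^(2*r+m*k+m*n) * qLah q m r n k
      + qint q (2*r+(k+1)*m+n*m) * qLah q m r n (k+1) := rfl

lemma keylem {q : ℝ} (hq : 0 < q) (hq1 : q ≠ 1) {m : ℕ} (hm : m ≠ 0) (r : ℕ) :
    ∀ n k : ℕ, qfact (q^m) k * (qint q m)^k * qLah q m r n k
      = ∑ j ∈ range (k+1), cc q m k j * ∏ i ∈ range n, qint q (2*r + j*m + i*m) := by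
  have hQ : (0:ℝ) < q ^ m := pow_pos hq m
  have hQ1 : q ^ m ≠ 1 := qpow_ne_one hq hq1 hm
  intro n
  induction n with
  | zero =>
    intro k
    simp only [Finset.prod_range_zero, mul_one]
    cases k with
    | zero =>
      rw [qLah_zz, Finset.sum_range_one, cc_self hq hq1 hm 0]
      norm_num [qfact]
    | succ k =>
      rw [qLah_zs, cc_sum_eq_zero hq hq1 hm (Nat.succ_ne_zero k)]
      ring
  | succ n ih =>
    intro k
    cases k with
    | zero =>
      rw [qLah_sz, Finset.sum_range_one, Finset.prod_range_succ]
      have ihh := ih 0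
      rw [Finset.sum_range_one] at ihh
      rw [cc_self hq hq1 hm 0] at ihh ⊢
      simp only [pow_zero, mul_one, one_mul] at ihh ⊢
      rw [show qfact (q^m) 0 = 1 from rfl] at ihh ⊢
      simp only [one_mul] at ihh ⊢
      rw [← ihh]
      have : qint q (2*(r:ℤ) + (0:ℕ)*(m:ℤ) + (n:ℤ)*(m:ℤ)) = qint q (2*(r:ℤ) + (n:ℤ)*(m:ℤ)) := by
        norm_num
      push_cast at this ⊢
      rw [this]
      ring
    | succ k =>
      rw [qLah_ss]
      have hsplit : ∀ j ∈ range (k+2),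
          cc q m (k+1) j * ∏ i ∈ range (n+1), qint q (2*r + j*m + i*m)
          = cc q m (k+1) j * (∏ i ∈ range n, qint q (2*r + j*m + i*m))
              * qint q (2*r+(k+1)*m+n*m)
            + cc q m (k+1) j
                * (qint q (2*r + j*m + n*m) - qint q (2*r+(k+1)*m+n*m))
                * ∏ i ∈ range n, qint q (2*r + j*m + i*m) := by
        intro j _
        rw [Finset.prod_range_succ]
        ring
      rw [Finset.sum_congr rfl hsplit, Finset.sum_add_distrib]
      -- first sum
      have h1 : ∑ j ∈ range (k+2),
          cc q m (k+1) j * (∏ i ∈ range n, qint q (2*r + j*m + i*m))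
            * qint q (2*r+(k+1)*m+n*m)
          = (qfact (q^m) (k+1) * (qint q m)^(k+1) * qLah q m r n (k+1))
              * qint q (2*r+(k+1)*m+n*m) := by
        rw [← Finset.sum_mul, ← ih (k+1)]
      -- second sum
      have h2 : ∑ j ∈ range (k+2),
          cc q m (k+1) j * (qint q (2*r + j*m + n*m) - qint q (2*r+(k+1)*m+n*m))
            * ∏ i ∈ range n, qint q (2*r + j*m + i*m)
          = q ^ (2*r + m*k + m*n) * (qint (q^m) ((k:ℤ)+1) * qint q m)
              * (qfact (q^m) k * (qint q m)^k * qLah q m r n k) := by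
        rw [Finset.sum_range_succ]
        have hzero : qint q (2*(r:ℤ) + ((k+1 : ℕ):ℤ)*(m:ℤ) + (n:ℤ)*(m:ℤ))
            - qint q (2*(r:ℤ) + ((k:ℤ)+1)*(m:ℤ) + (n:ℤ)*(m:ℤ)) = 0 := by
          push_cast
          ring_nf
        push_cast at hzero
        push_cast
        rw [hzero]
        have h3 : ∀ j ∈ range (k+1),
            cc q m (k+1) j * (qint q (2*(r:ℤ) + (j:ℤ)*(m:ℤ) + (n:ℤ)*(m:ℤ))
                - qint q (2*(r:ℤ) + ((k:ℤ)+1)*(m:ℤ) + (n:ℤ)*(m:ℤ)))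
              * ∏ i ∈ range n, qint q (2*(r:ℤ) + (j:ℤ)*(m:ℤ) + (i:ℤ)*(m:ℤ))
            = q ^ (2*r + m*k + m*n) * (qint (q^m) ((k:ℤ)+1) * qint q m)
                * (cc q m k j * ∏ i ∈ range n, qint q (2*(r:ℤ) + (j:ℤ)*(m:ℤ) + (i:ℤ)*(m:ℤ))) := by
          intro j hj
          have hjk : j ≤ k := Nat.lt_succ_iff.mp (mem_range.mp hj)
          rw [star hq hq1 hm r n hjk]
          ring
        rw [Finset.sum_congr rfl h3, ← Finset.mul_sum, ← ih k]
        ring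
      rw [h1, h2]
      rw [qfact_succ (q^m) k]
      push_cast
      ring

theorem qLah_exponential_generating_function (q : ℝ) (hq : 0 < q) (hq1 : q ≠ 1) (m r : ℕ) (hm : 0 < m) (hr : 0 < r)
    (k : ℕ) :
    (PowerSeries.mk fun n => qLah q m r n k / qfact q n) =
      PowerSeries.C (R := ℝ) (1 / (qfact (q ^ m) k * (qint q m) ^ k)) *
        ∑ j ∈ Finset.range (k + 1),
          PowerSeries.C (R := ℝ)
              ((-1 : ℝ) ^ (k - j) * q ^ (m * Nat.choose (k - j) 2) * qbinom (q ^ m) k j) *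
            PowerSeries.mk
              (fun n => (∏ i ∈ Finset.range n, qint q (2 * r + j * m + i * m)) / qfact q n) := by
  have hm' : m ≠ 0 := hm.ne'
  have hQ : (0:ℝ) < q ^ m := pow_pos hq m
  have hQ1 : q ^ m ≠ 1 := qpow_ne_one hq hq1 hm'
  ext n
  rw [PowerSeries.coeff_mk, PowerSeries.coeff_C_mul, map_sum]
  have hterm : ∀ j ∈ range (k+1),
      (PowerSeries.coeff (R := ℝ) n)
        (PowerSeries.C (R := ℝ) ((-1 : ℝ) ^ (k - j) * q ^ (m * Nat.choose (k - j) 2) * qbinom (q ^ m) k j) *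
          PowerSeries.mk (fun n => (∏ i ∈ Finset.range n, qint q (2 * r + j * m + i * m)) / qfact q n))
      = cc q m k j * ((∏ i ∈ Finset.range n, qint q (2 * r + j * m + i * m)) / qfact q n) := by
    intro j _
    rw [PowerSeries.coeff_C_mul, PowerSeries.coeff_mk]
    rfl
  rw [Finset.sum_congr rfl hterm]
  have hsum : ∑ j ∈ range (k+1),
      cc q m k j * ((∏ i ∈ Finset.range n, qint q (2 * r + j * m + i * m)) / qfact q n)
      = (∑ j ∈ range (k+1),
          cc q m k j * ∏ i ∈ Finset.range n, qint q (2 * r + j * m + i * m)) / qfact q n := by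
    rw [Finset.sum_div]
    exact Finset.sum_congr rfl fun j _ => (mul_div_assoc _ _ _).symm
  rw [hsum, ← keylem hq hq1 hm' r n k]
  have hfn := qfact_ne_zero hq hq1 n
  have hD : qfact (q^m) k * (qint q m)^k ≠ 0 :=
    mul_ne_zero (qfact_ne_zero hQ hQ1 k) (pow_ne_zero k (qint_ne_zero hq hq1 hm'))
  field_simp
  rw [mul_assoc, mul_div_assoc, div_self hD, mul_one]
end

section
/- The (q,r)-Whitney numbers of the first kind satisfy the triangular recurrence relation w_{m,r}[n+1,k]_q = q^{−(r+nm)} ( w_{m,r}[n,k−1]_q − [r+nm]_q · w_{m,r}[n,k]_q ) for all integers n ≥ 0 and 0 ≤ k ≤ n+1 (with the conventions w_{m,r}[n,−1]_q = 0 and w_{m,r}[n,k]_q = 0 for k > n), together with w_{m,r}[0,0]_q = 1 and w_{m,r}[n,0]_q = ∏_{i=0}^{n−1} (−q^{−(r+im)}[r+im]_q). -/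
open Finset

lemma coeff_helper (N : ℕ) (f : ℕ → ℝ) (k : ℕ) :
    (∑ j ∈ Finset.range N, Polynomial.C (f j) * Polynomial.X ^ j).coeff k =
      if k < N then f k else 0 := by
  simp only [Polynomial.finset_sum_coeff, Polynomial.coeff_C_mul, Polynomial.coeff_X_pow,
    mul_ite, mul_one, mul_zero]
  rw [Finset.sum_ite_eq (Finset.range N) k f]
  simp [Finset.mem_range]

theorem qWhitney1_triangular_recurrence (q : ℝ) (hq : 0 < q) (hq1 : q ≠ 1) (m r : ℕ) (hm : 0 < m) (hr : 0 < r)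
    (w : ℕ → ℕ → ℝ)
    (hw : ∀ (n : ℕ) (x : ℝ),
      ∏ i ∈ Finset.range n, (q ^ (-((r : ℤ) + i * m)) * (x - qint q ((r : ℤ) + i * m))) =
        ∑ k ∈ Finset.range (n + 1), w n k * x ^ k)
    (hw0 : ∀ n k : ℕ, n < k → w n k = 0) :
    (∀ (n k : ℕ), k ≤ n + 1 →
        w (n + 1) k =
          q ^ (-((r : ℤ) + n * m)) *
            ((if k = 0 then 0 else w n (k - 1)) - qint q ((r : ℤ) + n * m) * w n k)) ∧
      w 0 0 = 1 ∧
      ∀ n : ℕ, w n 0 =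
        ∏ i ∈ Finset.range n, (-(q ^ (-((r : ℤ) + i * m)) * qint q ((r : ℤ) + i * m))) := by
  refine ⟨?_, ?_, ?_⟩
  · intro n k hk
    set a : ℝ := q ^ (-((r : ℤ) + n * m)) with ha
    set c : ℝ := qint q ((r : ℤ) + n * m) with hc
    have key : ∀ x : ℝ, ∑ j ∈ Finset.range (n + 2), w (n + 1) j * x ^ j =
        (∑ j ∈ Finset.range (n + 1), w n j * x ^ j) * (a * (x - c)) := by
      intro x
      rw [← hw (n + 1) x, Finset.prod_range_succ, ← hw n x]
    have hpq : (∑ j ∈ Finset.range (n + 2), Polynomial.C (w (n + 1) j) * Polynomial.X ^ j) =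
        (∑ j ∈ Finset.range (n + 1), Polynomial.C (w n j) * Polynomial.X ^ j) *
          (Polynomial.C a * (Polynomial.X - Polynomial.C c)) := by
      apply Polynomial.funext
      intro x
      simp only [Polynomial.eval_finset_sum, Polynomial.eval_mul, Polynomial.eval_pow,
        Polynomial.eval_C, Polynomial.eval_X, Polynomial.eval_sub]
      exact key x
    have hco := congrArg (fun p => Polynomial.coeff p k) hpq
    simp only [coeff_helper] at hco
    have hP : ∀ j : ℕ, (∑ j ∈ Finset.range (n + 1), Polynomial.C (w n j) * Polynomial.X ^ j).coeff j = w n j := by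
      intro j
      rw [coeff_helper]
      split
      · rfl
      · exact (hw0 n j (by omega)).symm
    set P : Polynomial ℝ := ∑ j ∈ Finset.range (n + 1), Polynomial.C (w n j) * Polynomial.X ^ j with hPdef
    have hR : (P * (Polynomial.C a * (Polynomial.X - Polynomial.C c))).coeff k =
        a * ((if k = 0 then 0 else w n (k - 1)) - c * w n k) := by
      have : P * (Polynomial.C a * (Polynomial.X - Polynomial.C c)) =
          Polynomial.C a * (P * Polynomial.X) - Polynomial.C (a * c) * P := by
        ring_nf
        rw [Polynomial.C_mul]
        ring
      rw [this, Polynomial.coeff_sub, Polynomial.coeff_C_mul, Polynomial.coeff_C_mul]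
      have hPX : (P * Polynomial.X).coeff k = if k = 0 then 0 else P.coeff (k - 1) := by
        cases k with
        | zero => simp [Polynomial.mul_coeff_zero]
        | succ k => simp [Polynomial.coeff_mul_X]
      rw [hPX, hP k]
      cases k with
      | zero => simp; ring
      | succ k => simp [hP k]; ring
    rw [hR] at hco
    rw [if_pos (by omega : k < n + 2)] at hco
    exact hco
  · have h := hw 0 0
    simpa using h.symm
  · intro n
    have h := hw n 0
    rw [Finset.sum_eq_single 0] at h
    · simp only [pow_zero, mul_one] at h
      rw [← h]
      apply Finset.prod_congr rfl
      intro i _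
      ring
    · intro b _ hb
      simp [zero_pow hb]
    · simp
end
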